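/- (Correctness of the Case-2 fusion formulas.) Let m ≥ 1 and let p, q : Fin m → Fin m be bijections (0-indexed rank representations) such that the suffix of p and the prefix of q have the same relative order, and (p 0 : ℕ) = (q (m−1) : ℕ) =: c. Define r, h : Fin (m+1) → Fin (m+1) by: r 0 = c, r m = c + 1, h 0 = c + 1, h m = c, and for each i with 0 ≤ i ≤ m − 2: r (i+1) = h (i+1) = q i (as a natural number) if (q i : ℕ) < c, and r (i+1) = h (i+1) = (q i : ℕ) + 1 otherwise. Then r and h are bijections of Fin (m+1) with r ≠ h, r 0 < r m, h m < h 0, the prefixes of both r and h have the same relative order as p, and the suffixes of both r and h have the same relative order as q. -/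

import Mathlib

/-- For a pattern `u` of length `m+1`, its prefix `(u 0, …, u (m-1))`. -/
def prefixPat {m : ℕ} {α : Type*} (u : Fin (m + 1) → α) : Fin m → α :=
  fun j => u j.castSucc

/-- For a pattern `u` of length `m+1`, its suffix `(u 1, …, u m)`. -/
def suffixPat {m : ℕ} {α : Type*} (u : Fin (m + 1) → α) : Fin m → α :=
  fun j => u j.succ

/-- `p` occurs in the time series `t` at (0-based) ending position `i`:
the window `(t (i-m+1), …, t i)` has the same relative order as `p`. -/
def occursAt {n m : ℕ} {α : Type*} [LT α] (t : Fin n → ℝ) (p : Fin m → α) (i : ℕ) : Prop :=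
  ∃ (h1 : m ≤ i + 1) (h2 : i < n),
    ∀ a b : Fin m,
      (t ⟨i + 1 - m + a.val, by have := a.isLt; omega⟩ <
        t ⟨i + 1 - m + b.val, by have := b.isLt; omega⟩) ↔ p a < p b

/-- The support of `p` in `t`: the number of ending positions at which `p` occurs. -/
noncomputable def supCount {n m : ℕ} {α : Type*} [LT α] (t : Fin n → ℝ) (p : Fin m → α) : ℕ :=
  {i : ℕ | occursAt t p i}.ncard

/-- Correctness of the Case-2 fusion formulas: when the first rank of `p`
equals the last rank of `q` (call it `c`), the two patterns `r` and `h` built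
by the fusion formulas are distinct bijections, with `r 0 < r m` and
`h m < h 0`, whose prefixes are order-equivalent to `p` and whose suffixes are
order-equivalent to `q`. -/

lemma same_order_same_image {k N : ℕ} (u v : Fin k → Fin N)
    (hu : Function.Injective u) (hv : Function.Injective v)
    (himg : Finset.image u Finset.univ = Finset.image v Finset.univ)
    (hord : ∀ i j, u i < u j ↔ v i < v j) : u = v := by
  funext i
  have hcard : ∀ (w : Fin k → Fin N), Function.Injective w → ∀ a : Fin N,
      ((Finset.image w Finset.univ).filter (· < a)).card
        = (Finset.univ.filter (fun j => w j < a)).card := by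
    intro w hw a
    rw [Finset.filter_image, Finset.card_image_of_injective _ hw]
  have hfe : (Finset.univ.filter (fun j => u j < u i))
      = (Finset.univ.filter (fun j => v j < v i)) := by
    apply Finset.filter_congr
    intro j _
    simp [hord]
  have hkey : ((Finset.image u Finset.univ).filter (· < u i)).card
      = ((Finset.image u Finset.univ).filter (· < v i)).card := by
    calc ((Finset.image u Finset.univ).filter (· < u i)).card
        = (Finset.univ.filter (fun j => u j < u i)).card := hcard u hu (u i)
      _ = (Finset.univ.filter (fun j => v j < v i)).card := by rw [hfe]
      _ = ((Finset.image v Finset.univ).filter (· < v i)).card := (hcard v hv (v i)).symm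
      _ = ((Finset.image u Finset.univ).filter (· < v i)).card := by rw [himg]
  rcases lt_trichotomy (u i) (v i) with hlt | heq | hgt
  · exfalso
    have hss : (Finset.image u Finset.univ).filter (· < u i)
        ⊂ (Finset.image u Finset.univ).filter (· < v i) := by
      refine ⟨Finset.monotone_filter_right _ (fun x _ hx => lt_trans hx hlt), fun hsub => ?_⟩
      have hmem : u i ∈ (Finset.image u Finset.univ).filter (· < v i) := by
        simp [Finset.mem_filter, hlt]
      have := hsub hmem
      simp at this
    have := Finset.card_lt_card hss
    omega
  · exact heq
  · exfalso
    have hss : (Finset.image u Finset.univ).filter (· < v i)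
        ⊂ (Finset.image u Finset.univ).filter (· < u i) := by
      refine ⟨Finset.monotone_filter_right _ (fun x _ hx => lt_trans hx hgt), fun hsub => ?_⟩
      have hmem : v i ∈ (Finset.image u Finset.univ).filter (· < u i) := by
        simp only [Finset.mem_filter, himg]
        exact ⟨Finset.mem_image_of_mem v (Finset.mem_univ i), hgt⟩
      have := hsub hmem
      simp at this
    have := Finset.card_lt_card hss
    omega

def fuseF (c : ℕ) : ℕ → ℕ := fun x => if x < c then x else x + 1
def fuseG (c : ℕ) : ℕ → ℕ := fun x => if x ≤ c then x else x + 1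

lemma fuseF_lt {c a b : ℕ} : fuseF c a < fuseF c b ↔ a < b := by
  unfold fuseF; split_ifs <;> omega
lemma fuseG_lt {c a b : ℕ} : fuseG c a < fuseG c b ↔ a < b := by
  unfold fuseG; split_ifs <;> omega
lemma fuseF_inj {c a b : ℕ} (h : fuseF c a = fuseF c b) : a = b := by
  unfold fuseF at h; split_ifs at h <;> omega
lemma fuseG_inj {c a b : ℕ} (h : fuseG c a = fuseG c b) : a = b := by
  unfold fuseG at h; split_ifs at h <;> omega
lemma fuseF_ne {c a : ℕ} : fuseF c a ≠ c := by
  unfold fuseF; split_ifs <;> omega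
lemma fuseG_ne {c a : ℕ} : fuseG c a ≠ c + 1 := by
  unfold fuseG; split_ifs <;> omega
lemma fuseF_eq_fuseG {c a : ℕ} (h : a ≠ c) : fuseF c a = fuseG c a := by
  unfold fuseF fuseG; split_ifs <;> omega

theorem fusion_case_two_formulas_correct {m : ℕ}
    (p q : Fin (m + 1) → Fin (m + 1))
    (hp : Function.Bijective p) (hq : Function.Bijective q)
    (hpq : ∀ i j : Fin m, suffixPat p i < suffixPat p j ↔ prefixPat q i < prefixPat q j)
    (c : ℕ) (hc : (p 0 : ℕ) = c) (hc' : (q (Fin.last m) : ℕ) = c)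
    (r h : Fin (m + 2) → Fin (m + 2))
    (hr0 : (r 0 : ℕ) = c) (hrm : (r (Fin.last (m + 1)) : ℕ) = c + 1)
    (hh0 : (h 0 : ℕ) = c + 1) (hhm : (h (Fin.last (m + 1)) : ℕ) = c)
    (hmid : ∀ i : Fin m,
      (r i.castSucc.succ : ℕ) =
        (if (q i.castSucc : ℕ) < c then (q i.castSucc : ℕ) else (q i.castSucc : ℕ) + 1) ∧
      (h i.castSucc.succ : ℕ) =
        (if (q i.castSucc : ℕ) < c then (q i.castSucc : ℕ) else (q i.castSucc : ℕ) + 1)) :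
    Function.Bijective r ∧ Function.Bijective h ∧ r ≠ h ∧
    r 0 < r (Fin.last (m + 1)) ∧ h (Fin.last (m + 1)) < h 0 ∧
    (∀ i j : Fin (m + 1), prefixPat r i < prefixPat r j ↔ p i < p j) ∧
    (∀ i j : Fin (m + 1), suffixPat r i < suffixPat r j ↔ q i < q j) ∧
    (∀ i j : Fin (m + 1), prefixPat h i < prefixPat h j ↔ p i < p j) ∧
    (∀ i j : Fin (m + 1), suffixPat h i < suffixPat h j ↔ q i < q j) := by
  classical
  have hpinj := hp.injective
  have hqinj := hq.injective
  have hplast : p 0 = q (Fin.last m) := Fin.val_injective (by rw [hc, hc'])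
  have hqc : ∀ i : Fin m, (q i.castSucc : ℕ) ≠ c := by
    intro i hx
    have h1 : q i.castSucc = q (Fin.last m) := Fin.val_injective (hx.trans hc'.symm)
    exact absurd (hqinj h1) (ne_of_lt (Fin.castSucc_lt_last i))
  -- suffixPat p = prefixPat q
  have hsufinj : Function.Injective (suffixPat p) := fun a b hab =>
    Fin.succ_injective _ (hpinj hab)
  have hpreinj : Function.Injective (prefixPat q) := fun a b hab =>
    Fin.castSucc_injective _ (hqinj hab)
  have himg1 : Finset.image (suffixPat p) Finset.univ = Finset.univ.erase (p 0) := by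
    ext x
    simp only [Finset.mem_image, Finset.mem_erase, Finset.mem_univ, and_true, true_and,
      suffixPat]
    constructor
    · rintro ⟨j, -, rfl⟩ hx
      exact Fin.succ_ne_zero j (hpinj hx)
    · intro hx
      obtain ⟨y, rfl⟩ := hp.surjective x
      have hy : y ≠ 0 := fun hy0 => hx (by rw [hy0])
      exact ⟨y.pred hy, by rw [Fin.succ_pred]⟩
  have himg2 : Finset.image (prefixPat q) Finset.univ = Finset.univ.erase (q (Fin.last m)) := by
    ext x
    simp only [Finset.mem_image, Finset.mem_erase, Finset.mem_univ, and_true, true_and,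
      prefixPat]
    constructor
    · rintro ⟨j, -, rfl⟩ hx
      exact absurd (hqinj hx) (ne_of_lt (Fin.castSucc_lt_last j))
    · intro hx
      obtain ⟨y, rfl⟩ := hq.surjective x
      have hy : y ≠ Fin.last m := fun hy0 => hx (by rw [hy0])
      exact ⟨y.castPred hy, by rw [Fin.castSucc_castPred]⟩
  have hkey : suffixPat p = prefixPat q := by
    apply same_order_same_image _ _ hsufinj hpreinj _ hpq
    rw [himg1, himg2, hplast]
  have hkey' : ∀ i : Fin m, p i.succ = q i.castSucc := fun i => congrFun hkey i
  -- value formulas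
  have hr_succ : ∀ j : Fin (m + 1), (r j.succ : ℕ) = fuseF c (q j : ℕ) := by
    intro j
    rcases eq_or_ne j (Fin.last m) with rfl | hj
    · rw [Fin.succ_last, hrm, hc']
      unfold fuseF; simp
    · obtain ⟨i, rfl⟩ : ∃ i : Fin m, i.castSucc = j := ⟨j.castPred hj, Fin.castSucc_castPred _ _⟩
      rw [(hmid i).1]; rfl
  have hh_succ : ∀ j : Fin (m + 1), (h j.succ : ℕ) = fuseG c (q j : ℕ) := by
    intro j
    rcases eq_or_ne j (Fin.last m) with rfl | hj
    · rw [Fin.succ_last, hhm, hc']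
      unfold fuseG; simp
    · obtain ⟨i, rfl⟩ : ∃ i : Fin m, i.castSucc = j := ⟨j.castPred hj, Fin.castSucc_castPred _ _⟩
      rw [(hmid i).2]
      have := hqc i; unfold fuseG; split_ifs <;> omega
  have hr_cast : ∀ j : Fin (m + 1), (r j.castSucc : ℕ) = fuseG c (p j : ℕ) := by
    intro j
    rcases eq_or_ne j 0 with rfl | hj
    · rw [show ((0 : Fin (m + 1)).castSucc) = 0 from rfl, hr0, hc]
      unfold fuseG; simp
    · obtain ⟨i, rfl⟩ : ∃ i : Fin m, i.succ = j := ⟨j.pred hj, Fin.succ_pred _ _⟩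
      rw [← Fin.succ_castSucc, (hmid i).1, hkey' i]
      have := hqc i; unfold fuseG; split_ifs <;> omega
  have hh_cast : ∀ j : Fin (m + 1), (h j.castSucc : ℕ) = fuseF c (p j : ℕ) := by
    intro j
    rcases eq_or_ne j 0 with rfl | hj
    · rw [show ((0 : Fin (m + 1)).castSucc) = 0 from rfl, hh0, hc]
      unfold fuseF; simp
    · obtain ⟨i, rfl⟩ : ∃ i : Fin m, i.succ = j := ⟨j.pred hj, Fin.succ_pred _ _⟩
      rw [← Fin.succ_castSucc, (hmid i).2, hkey' i]; rfl
  -- injectivity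
  have hrinj : Function.Injective r := by
    intro a b hab
    induction a using Fin.cases with
    | zero =>
      induction b using Fin.cases with
      | zero => rfl
      | succ j =>
        exfalso
        have hv : (r 0 : ℕ) = (r j.succ : ℕ) := by rw [hab]
        rw [hr0, hr_succ] at hv
        exact fuseF_ne hv.symm
    | succ j =>
      induction b using Fin.cases with
      | zero =>
        exfalso
        have hv : (r j.succ : ℕ) = (r 0 : ℕ) := by rw [hab]
        rw [hr0, hr_succ] at hv
        exact fuseF_ne hv
      | succ k =>
        have hv : (r j.succ : ℕ) = (r k.succ : ℕ) := by rw [hab]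
        rw [hr_succ, hr_succ] at hv
        exact congrArg Fin.succ (hqinj (Fin.val_injective (fuseF_inj hv)))
  have hhinj : Function.Injective h := by
    intro a b hab
    induction a using Fin.cases with
    | zero =>
      induction b using Fin.cases with
      | zero => rfl
      | succ j =>
        exfalso
        have hv : (h 0 : ℕ) = (h j.succ : ℕ) := by rw [hab]
        rw [hh0, hh_succ] at hv
        exact fuseG_ne hv.symm
    | succ j =>
      induction b using Fin.cases with
      | zero =>
        exfalso
        have hv : (h j.succ : ℕ) = (h 0 : ℕ) := by rw [hab]
        rw [hh0, hh_succ] at hv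
        exact fuseG_ne hv
      | succ k =>
        have hv : (h j.succ : ℕ) = (h k.succ : ℕ) := by rw [hab]
        rw [hh_succ, hh_succ] at hv
        exact congrArg Fin.succ (hqinj (Fin.val_injective (fuseG_inj hv)))
  refine ⟨Finite.injective_iff_bijective.mp hrinj, Finite.injective_iff_bijective.mp hhinj,
    ?_, ?_, ?_, ?_, ?_, ?_, ?_⟩
  · intro he
    have hv : (r 0 : ℕ) = (h 0 : ℕ) := by rw [he]
    rw [hr0, hh0] at hv
    omega
  · rw [Fin.lt_def, hr0, hrm]; omega
  · rw [Fin.lt_def, hh0, hhm]; omega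
  · intro i j
    show (r i.castSucc : ℕ) < (r j.castSucc : ℕ) ↔ (p i : ℕ) < (p j : ℕ)
    rw [hr_cast, hr_cast]; exact fuseG_lt
  · intro i j
    show (r i.succ : ℕ) < (r j.succ : ℕ) ↔ (q i : ℕ) < (q j : ℕ)
    rw [hr_succ, hr_succ]; exact fuseF_lt
  · intro i j
    show (h i.castSucc : ℕ) < (h j.castSucc : ℕ) ↔ (p i : ℕ) < (p j : ℕ)
    rw [hh_cast, hh_cast]; exact fuseF_lt
  · intro i j
    show (h i.succ : ℕ) < (h j.succ : ℕ) ↔ (q i : ℕ) < (q j : ℕ)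
    rw [hh_succ, hh_succ]; exact fuseG_lt
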